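/- Let E = {0} ∪ ⋃_{k=1}^∞ [2^{−2k+1}, 2^{−2k+2}] ⊆ ℝ and let X = E × [0,1] ⊆ ℝ². Consider the ten similarity maps g_{1,j}(x,y) = ((x, y+j))/4 for j = 0,1,2,3, g_{2,j}(x,y) = ((x+2, y+j))/4 for j = 0,1,2,3, and g_{3,j}(x,y) = ((x+1, y+j))/2 for j = 0,1. Then X = ⋃ over these ten maps g of g(X) (so X is a self-similar set), and this iterated function system satisfies the open set condition: there exists a nonempty open set U ⊆ ℝ² such that the ten images g(U) are pairwise disjoint and all contained in U. -/
import Mathlib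


/-- `E = {0} ∪ ⋃_{k≥1} [2^{-2k+1}, 2^{-2k+2}] ⊆ ℝ`. -/
def setE : Set ℝ :=
  insert 0 (⋃ k : ℕ, Set.Icc ((2 : ℝ) ^ (-2 * ((k : ℤ) + 1) + 1)) ((2 : ℝ) ^ (-2 * ((k : ℤ) + 1) + 2)))

/-- The ten similarity maps `g_{1,j}(x,y) = ((x, y+j))/4` (`j = 0,1,2,3`),
`g_{2,j}(x,y) = ((x+2, y+j))/4` (`j = 0,1,2,3`), `g_{3,j}(x,y) = ((x+1, y+j))/2`
(`j = 0,1`). -/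
noncomputable def gmaps : Fin 10 → (ℝ × ℝ) → ℝ × ℝ :=
  ![fun p => (p.1 / 4, (p.2 + 0) / 4),
    fun p => (p.1 / 4, (p.2 + 1) / 4),
    fun p => (p.1 / 4, (p.2 + 2) / 4),
    fun p => (p.1 / 4, (p.2 + 3) / 4),
    fun p => ((p.1 + 2) / 4, (p.2 + 0) / 4),
    fun p => ((p.1 + 2) / 4, (p.2 + 1) / 4),
    fun p => ((p.1 + 2) / 4, (p.2 + 2) / 4),
    fun p => ((p.1 + 2) / 4, (p.2 + 3) / 4),
    fun p => ((p.1 + 1) / 2, (p.2 + 0) / 2),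
    fun p => ((p.1 + 1) / 2, (p.2 + 1) / 2)]

lemma g0 (p : ℝ × ℝ) : gmaps 0 p = (p.1 / 4, (p.2 + 0) / 4) := rfl
lemma g1 (p : ℝ × ℝ) : gmaps 1 p = (p.1 / 4, (p.2 + 1) / 4) := rfl
lemma g2 (p : ℝ × ℝ) : gmaps 2 p = (p.1 / 4, (p.2 + 2) / 4) := rfl
lemma g3 (p : ℝ × ℝ) : gmaps 3 p = (p.1 / 4, (p.2 + 3) / 4) := rfl
lemma g4 (p : ℝ × ℝ) : gmaps 4 p = ((p.1 + 2) / 4, (p.2 + 0) / 4) := rfl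
lemma g5 (p : ℝ × ℝ) : gmaps 5 p = ((p.1 + 2) / 4, (p.2 + 1) / 4) := rfl
lemma g6 (p : ℝ × ℝ) : gmaps 6 p = ((p.1 + 2) / 4, (p.2 + 2) / 4) := rfl
lemma g7 (p : ℝ × ℝ) : gmaps 7 p = ((p.1 + 2) / 4, (p.2 + 3) / 4) := rfl
lemma g8 (p : ℝ × ℝ) : gmaps 8 p = ((p.1 + 1) / 2, (p.2 + 0) / 2) := rfl
lemma g9 (p : ℝ × ℝ) : gmaps 9 p = ((p.1 + 1) / 2, (p.2 + 1) / 2) := rfl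

lemma two_lt : (1:ℝ) < 2 := one_lt_two

lemma zp_pos (n : ℤ) : (0:ℝ) < 2^n := zpow_pos (by norm_num) n

lemma mem_setE_iff {x : ℝ} : x ∈ setE ↔ x = 0 ∨ ∃ k : ℕ,
    (2:ℝ)^(-2*(k:ℤ)-1) ≤ x ∧ x ≤ (2:ℝ)^(-2*(k:ℤ)) := by
  unfold setE
  simp only [Set.mem_insert_iff, Set.mem_iUnion, Set.mem_Icc]
  constructor <;> rintro (h | ⟨k, h1, h2⟩)
  · exact Or.inl h
  · refine Or.inr ⟨k, ?_, ?_⟩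
    · rwa [show -2*(k:ℤ)-1 = -2*((k:ℤ)+1)+1 by ring]
    · rwa [show -2*(k:ℤ) = -2*((k:ℤ)+1)+2 by ring]
  · exact Or.inl h
  · refine Or.inr ⟨k, ?_, ?_⟩
    · rwa [show -2*((k:ℤ)+1)+1 = -2*(k:ℤ)-1 by ring]
    · rwa [show -2*((k:ℤ)+1)+2 = -2*(k:ℤ) by ring]

lemma mem_setE_of (k : ℕ) {x : ℝ} (h1 : (2:ℝ)^(-2*(k:ℤ)-1) ≤ x) (h2 : x ≤ (2:ℝ)^(-2*(k:ℤ))) :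
    x ∈ setE := mem_setE_iff.2 (Or.inr ⟨k, h1, h2⟩)

lemma zero_mem_setE : (0:ℝ) ∈ setE := mem_setE_iff.2 (Or.inl rfl)

lemma half_mem_setE : (1/2 : ℝ) ∈ setE := by
  apply mem_setE_of 0 <;> norm_num

lemma setE_subset : setE ⊆ Set.Icc 0 1 := by
  intro x hx
  rcases mem_setE_iff.1 hx with rfl | ⟨k, h1, h2⟩
  · exact ⟨le_refl 0, by norm_num⟩
  · constructor
    · exact le_trans (zp_pos _).le h1
    · refine h2.trans (zpow_le_one_of_nonpos₀ two_lt.le (by omega))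

lemma E_maps {x : ℝ} (hx : x ∈ setE) :
    x/4 ∈ setE ∧ (x+2)/4 ∈ setE ∧ (x+1)/2 ∈ setE := by
  obtain ⟨hx0, hx1⟩ := setE_subset hx
  refine ⟨?_, ?_, ?_⟩
  · rcases mem_setE_iff.1 hx with rfl | ⟨k, h1, h2⟩
    · simpa using zero_mem_setE
    · apply mem_setE_of (k+1)
      · rw [show (-2*(↑(k+1):ℤ)-1) = (-2*(k:ℤ)-1) + (-2) by push_cast; ring,
          zpow_add₀ (by norm_num : (2:ℝ) ≠ 0),
          show (2:ℝ)^(-2:ℤ) = 1/4 by norm_num]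
        linarith
      · rw [show (-2*(↑(k+1):ℤ)) = (-2*(k:ℤ)) + (-2) by push_cast; ring,
          zpow_add₀ (by norm_num : (2:ℝ) ≠ 0),
          show (2:ℝ)^(-2:ℤ) = 1/4 by norm_num]
        linarith
  · apply mem_setE_of 0 <;> norm_num <;> linarith
  · apply mem_setE_of 0 <;> norm_num <;> linarith

lemma E_split {x : ℝ} (hx : x ∈ setE) :
    (∃ y ∈ setE, y/4 = x) ∨ (∃ y ∈ setE, (y+2)/4 = x) ∨ (∃ y ∈ setE, (y+1)/2 = x) := by
  classical
  rcases mem_setE_iff.1 hx with rfl | ⟨k, h1, h2⟩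
  · exact Or.inl ⟨0, zero_mem_setE, by norm_num⟩
  rcases k with _ | k'
  · -- x ∈ [1/2, 1]
    norm_num at h1 h2
    set t : ℝ := 2*x - 1 with ht
    have ht0 : 0 ≤ t := by simp [ht]; linarith
    have ht1 : t ≤ 1 := by simp [ht]; linarith
    rcases eq_or_lt_of_le ht0 with htz | htpos
    · refine Or.inr (Or.inl ⟨0, zero_mem_setE, ?_⟩)
      simp [ht] at htz; linarith
    · -- find minimal n with 2^{-n-1} < t
      have hex : ∃ n : ℕ, (2:ℝ)^(-(n:ℤ)-1) < t := by
        obtain ⟨n, hn⟩ := exists_pow_lt_of_lt_one htpos (by norm_num : (1/2:ℝ) < 1)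
        refine ⟨n, lt_of_le_of_lt ?_ hn⟩
        rw [show ((1:ℝ)/2)^n = (2:ℝ)^(-(n:ℤ)) by
          rw [one_div, inv_pow, ← zpow_natCast, ← zpow_neg]]
        apply zpow_le_zpow_right₀ two_lt.le; omega
      set n := Nat.find hex with hn
      have hlow : (2:ℝ)^(-(n:ℤ)-1) < t := Nat.find_spec hex
      have hhigh : t ≤ (2:ℝ)^(-(n:ℤ)) := by
        rcases Nat.eq_zero_or_pos n with h0 | h0
        · rw [h0]; norm_num; exact ht1
        · have := Nat.find_min hex (show n - 1 < n by omega)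
          push_neg at this
          have e : (-(↑(n-1):ℤ)-1) = -(n:ℤ) := by
            have : (↑(n-1):ℤ) = n - 1 := by omega
            rw [this]; ring
          rwa [e] at this
      rcases Nat.even_or_odd n with ⟨k, hk⟩ | ⟨k, hk⟩
      · -- n = 2k : t ∈ E, x = (t+1)/2
        refine Or.inr (Or.inr ⟨t, ?_, by rw [ht]; ring⟩)
        apply mem_setE_of k
        · rw [show -2*(k:ℤ)-1 = -(n:ℤ)-1 by omega]; exact hlow.le
        · rw [show -2*(k:ℤ) = -(n:ℤ) by omega]; exact hhigh
      · -- n = 2k+1 : 2t ∈ E, x = (2t+2)/4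
        refine Or.inr (Or.inl ⟨2*t, ?_, by rw [ht]; ring⟩)
        apply mem_setE_of k
        · have : (2:ℝ)^(-2*(k:ℤ)-1) = 2^(-(n:ℤ)-1) * 2 := by
            rw [← zpow_add_one₀ (by norm_num : (2:ℝ) ≠ 0)]
            congr 1; omega
          rw [this]; linarith
        · have : (2:ℝ)^(-2*(k:ℤ)) = 2^(-(n:ℤ)) * 2 := by
            rw [← zpow_add_one₀ (by norm_num : (2:ℝ) ≠ 0)]
            congr 1; omega
          rw [this]; linarith
  · -- x ∈ interval k'+1 : x = (4x)/4
    refine Or.inl ⟨4*x, ?_, by ring⟩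
    apply mem_setE_of k'
    · have : (2:ℝ)^(-2*(k':ℤ)-1) = 4 * 2^(-2*((k':ℤ)+1)-1) := by
        rw [show (4:ℝ) = 2^(2:ℤ) by norm_num, ← zpow_add₀ (by norm_num : (2:ℝ) ≠ 0)]
        congr 1; push_cast; ring
      rw [this]
      have := h1; push_cast at this ⊢; linarith
    · have : (2:ℝ)^(-2*(k':ℤ)) = 4 * 2^(-2*((k':ℤ)+1)) := by
        rw [show (4:ℝ) = 2^(2:ℤ) by norm_num, ← zpow_add₀ (by norm_num : (2:ℝ) ≠ 0)]
        congr 1; push_cast; ring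
      rw [this]
      have := h2; push_cast at this ⊢; linarith

def setV : Set ℝ :=
  ⋃ k : ℕ, Set.Ioo ((2:ℝ)^(-2*(k:ℤ)-1)) ((2:ℝ)^(-2*(k:ℤ)))

lemma mem_setV_of (k : ℕ) {x : ℝ} (h1 : (2:ℝ)^(-2*(k:ℤ)-1) < x) (h2 : x < (2:ℝ)^(-2*(k:ℤ))) :
    x ∈ setV := Set.mem_iUnion.2 ⟨k, h1, h2⟩

lemma setV_subset : setV ⊆ Set.Ioo 0 1 := by
  rintro x hx
  obtain ⟨k, h1, h2⟩ := Set.mem_iUnion.1 hx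
  constructor
  · exact lt_of_le_of_lt (zp_pos _).le h1
  · exact lt_of_lt_of_le h2 (zpow_le_one_of_nonpos₀ two_lt.le (by omega))

lemma V_maps {x : ℝ} (hx : x ∈ setV) :
    x/4 ∈ setV ∧ (x+2)/4 ∈ setV ∧ (x+1)/2 ∈ setV := by
  obtain ⟨hx0, hx1⟩ := setV_subset hx
  refine ⟨?_, ?_, ?_⟩
  · obtain ⟨k, h1, h2⟩ := Set.mem_iUnion.1 hx
    apply mem_setV_of (k+1)
    · rw [show (-2*(↑(k+1):ℤ)-1) = (-2*(k:ℤ)-1) + (-2) by push_cast; ring,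
        zpow_add₀ (by norm_num : (2:ℝ) ≠ 0),
        show (2:ℝ)^(-2:ℤ) = 1/4 by norm_num]
      linarith
    · rw [show (-2*(↑(k+1):ℤ)) = (-2*(k:ℤ)) + (-2) by push_cast; ring,
        zpow_add₀ (by norm_num : (2:ℝ) ≠ 0),
        show (2:ℝ)^(-2:ℤ) = 1/4 by norm_num]
      linarith
  · apply mem_setV_of 0 <;> norm_num <;> linarith
  · apply mem_setV_of 0 <;> norm_num <;> linarith

lemma no_double {v w : ℝ} (hv : v ∈ setV) (hw : w ∈ setV) (h : v = 2*w) : False := by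
  obtain ⟨k, hk1, hk2⟩ := Set.mem_iUnion.1 hv
  obtain ⟨m, hm1, hm2⟩ := Set.mem_iUnion.1 hw
  have e1 : (2:ℝ)^(-2*(m:ℤ)) = 2^(-2*(m:ℤ)-1) * 2 := by
    rw [← zpow_add_one₀ (by norm_num : (2:ℝ) ≠ 0)]; congr 1; ring
  have e2 : (2:ℝ)^(-2*(m:ℤ)+1) = 2^(-2*(m:ℤ)) * 2 := by
    rw [← zpow_add_one₀ (by norm_num : (2:ℝ) ≠ 0)]
  have l1 : (2:ℝ)^(-2*(m:ℤ)) < 2^(-2*(k:ℤ)) := by rw [e1]; linarith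
  have l2 : (2:ℝ)^(-2*(k:ℤ)-1) < 2^(-2*(m:ℤ)+1) := by rw [e2]; linarith
  have i1 := (zpow_lt_zpow_iff_right₀ two_lt).1 l1
  have i2 := (zpow_lt_zpow_iff_right₀ two_lt).1 l2
  omega

lemma quarter {y : ℝ} (h0 : 0 ≤ y) (h1 : y ≤ 1) : ∃ t, 0 ≤ t ∧ t ≤ 1 ∧
    (y = (t+0)/4 ∨ y = (t+1)/4 ∨ y = (t+2)/4 ∨ y = (t+3)/4) := by
  rcases le_or_gt y (1/4) with h | h
  · exact ⟨4*y, by linarith, by linarith, Or.inl (by ring)⟩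
  rcases le_or_gt y (1/2) with h' | h'
  · exact ⟨4*y-1, by linarith, by linarith, Or.inr (Or.inl (by ring))⟩
  rcases le_or_gt y (3/4) with h'' | h''
  · exact ⟨4*y-2, by linarith, by linarith, Or.inr (Or.inr (Or.inl (by ring)))⟩
  · exact ⟨4*y-3, by linarith, by linarith, Or.inr (Or.inr (Or.inr (by ring)))⟩

lemma halfsplit {y : ℝ} (h0 : 0 ≤ y) (h1 : y ≤ 1) : ∃ t, 0 ≤ t ∧ t ≤ 1 ∧
    (y = (t+0)/2 ∨ y = (t+1)/2) := by
  rcases le_or_gt y (1/2) with h | h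
  · exact ⟨2*y, by linarith, by linarith, Or.inl (by ring)⟩
  · exact ⟨2*y-1, by linarith, by linarith, Or.inr (by ring)⟩

/-- `X = E × [0,1]` is the self-similar set of the ten maps above,
and this iterated function system satisfies the open set condition. -/
theorem X_self_similar_with_OSC :
    setE ×ˢ Set.Icc (0 : ℝ) 1 = ⋃ i : Fin 10, gmaps i '' (setE ×ˢ Set.Icc (0 : ℝ) 1)
    ∧ ∃ U : Set (ℝ × ℝ), U.Nonempty ∧ IsOpen U
        ∧ (∀ i : Fin 10, gmaps i '' U ⊆ U)
        ∧ (∀ i j : Fin 10, i ≠ j → Disjoint (gmaps i '' U) (gmaps j '' U)) := by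
  constructor
  · -- self-similarity
    apply Set.Subset.antisymm
    · rintro ⟨x, y⟩ ⟨hx, hy0, hy1⟩
      simp only [Set.mem_iUnion, Set.mem_image]
      rcases E_split hx with ⟨a, ha, hax⟩ | ⟨a, ha, hax⟩ | ⟨a, ha, hax⟩
      · obtain ⟨t, ht0, ht1, hc⟩ := quarter hy0 hy1
        rcases hc with hq | hq | hq | hq
        exacts [⟨0, (a, t), ⟨ha, ht0, ht1⟩, by rw [g0]; exact Prod.ext_iff.2 ⟨hax, hq.symm⟩⟩,
                ⟨1, (a, t), ⟨ha, ht0, ht1⟩, by rw [g1]; exact Prod.ext_iff.2 ⟨hax, hq.symm⟩⟩,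
                ⟨2, (a, t), ⟨ha, ht0, ht1⟩, by rw [g2]; exact Prod.ext_iff.2 ⟨hax, hq.symm⟩⟩,
                ⟨3, (a, t), ⟨ha, ht0, ht1⟩, by rw [g3]; exact Prod.ext_iff.2 ⟨hax, hq.symm⟩⟩]
      · obtain ⟨t, ht0, ht1, hc⟩ := quarter hy0 hy1
        rcases hc with hq | hq | hq | hq
        exacts [⟨4, (a, t), ⟨ha, ht0, ht1⟩, by rw [g4]; exact Prod.ext_iff.2 ⟨hax, hq.symm⟩⟩,
                ⟨5, (a, t), ⟨ha, ht0, ht1⟩, by rw [g5]; exact Prod.ext_iff.2 ⟨hax, hq.symm⟩⟩,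
                ⟨6, (a, t), ⟨ha, ht0, ht1⟩, by rw [g6]; exact Prod.ext_iff.2 ⟨hax, hq.symm⟩⟩,
                ⟨7, (a, t), ⟨ha, ht0, ht1⟩, by rw [g7]; exact Prod.ext_iff.2 ⟨hax, hq.symm⟩⟩]
      · obtain ⟨t, ht0, ht1, hc⟩ := halfsplit hy0 hy1
        rcases hc with hq | hq
        exacts [⟨8, (a, t), ⟨ha, ht0, ht1⟩, by rw [g8]; exact Prod.ext_iff.2 ⟨hax, hq.symm⟩⟩,
                ⟨9, (a, t), ⟨ha, ht0, ht1⟩, by rw [g9]; exact Prod.ext_iff.2 ⟨hax, hq.symm⟩⟩]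
    · rintro p hp
      simp only [Set.mem_iUnion, Set.mem_image] at hp
      obtain ⟨i, ⟨a, b⟩, ⟨ha, hb0, hb1⟩, rfl⟩ := hp
      replace ha : a ∈ setE := ha
      replace hb0 : (0:ℝ) ≤ b := hb0
      replace hb1 : b ≤ (1:ℝ) := hb1
      obtain ⟨hE1, hE2, hE3⟩ := E_maps ha
      fin_cases i
      · exact ⟨hE1, (⟨by linarith, by linarith⟩ : (0:ℝ) ≤ (b+0)/4 ∧ (b+0)/4 ≤ 1)⟩
      · exact ⟨hE1, (⟨by linarith, by linarith⟩ : (0:ℝ) ≤ (b+1)/4 ∧ (b+1)/4 ≤ 1)⟩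
      · exact ⟨hE1, (⟨by linarith, by linarith⟩ : (0:ℝ) ≤ (b+2)/4 ∧ (b+2)/4 ≤ 1)⟩
      · exact ⟨hE1, (⟨by linarith, by linarith⟩ : (0:ℝ) ≤ (b+3)/4 ∧ (b+3)/4 ≤ 1)⟩
      · exact ⟨hE2, (⟨by linarith, by linarith⟩ : (0:ℝ) ≤ (b+0)/4 ∧ (b+0)/4 ≤ 1)⟩
      · exact ⟨hE2, (⟨by linarith, by linarith⟩ : (0:ℝ) ≤ (b+1)/4 ∧ (b+1)/4 ≤ 1)⟩
      · exact ⟨hE2, (⟨by linarith, by linarith⟩ : (0:ℝ) ≤ (b+2)/4 ∧ (b+2)/4 ≤ 1)⟩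
      · exact ⟨hE2, (⟨by linarith, by linarith⟩ : (0:ℝ) ≤ (b+3)/4 ∧ (b+3)/4 ≤ 1)⟩
      · exact ⟨hE3, (⟨by linarith, by linarith⟩ : (0:ℝ) ≤ (b+0)/2 ∧ (b+0)/2 ≤ 1)⟩
      · exact ⟨hE3, (⟨by linarith, by linarith⟩ : (0:ℝ) ≤ (b+1)/2 ∧ (b+1)/2 ≤ 1)⟩
  · -- open set condition
    refine ⟨setV ×ˢ Set.Ioo 0 1, ⟨(3/4, 1/2), ?_, by norm_num⟩,
      (isOpen_iUnion fun k => isOpen_Ioo).prod isOpen_Ioo, ?_, ?_⟩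
    · exact mem_setV_of 0 (by norm_num) (by norm_num)
    · intro i
      rintro p ⟨⟨a, b⟩, ⟨ha, hb0, hb1⟩, rfl⟩
      replace ha : a ∈ setV := ha
      replace hb0 : (0:ℝ) < b := hb0
      replace hb1 : b < (1:ℝ) := hb1
      obtain ⟨hV1, hV2, hV3⟩ := V_maps ha
      fin_cases i
      · exact ⟨hV1, (⟨by linarith, by linarith⟩ : (0:ℝ) < (b+0)/4 ∧ (b+0)/4 < 1)⟩
      · exact ⟨hV1, (⟨by linarith, by linarith⟩ : (0:ℝ) < (b+1)/4 ∧ (b+1)/4 < 1)⟩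
      · exact ⟨hV1, (⟨by linarith, by linarith⟩ : (0:ℝ) < (b+2)/4 ∧ (b+2)/4 < 1)⟩
      · exact ⟨hV1, (⟨by linarith, by linarith⟩ : (0:ℝ) < (b+3)/4 ∧ (b+3)/4 < 1)⟩
      · exact ⟨hV2, (⟨by linarith, by linarith⟩ : (0:ℝ) < (b+0)/4 ∧ (b+0)/4 < 1)⟩
      · exact ⟨hV2, (⟨by linarith, by linarith⟩ : (0:ℝ) < (b+1)/4 ∧ (b+1)/4 < 1)⟩
      · exact ⟨hV2, (⟨by linarith, by linarith⟩ : (0:ℝ) < (b+2)/4 ∧ (b+2)/4 < 1)⟩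
      · exact ⟨hV2, (⟨by linarith, by linarith⟩ : (0:ℝ) < (b+3)/4 ∧ (b+3)/4 < 1)⟩
      · exact ⟨hV3, (⟨by linarith, by linarith⟩ : (0:ℝ) < (b+0)/2 ∧ (b+0)/2 < 1)⟩
      · exact ⟨hV3, (⟨by linarith, by linarith⟩ : (0:ℝ) < (b+1)/2 ∧ (b+1)/2 < 1)⟩
    · intro i j hij
      rw [Set.disjoint_left]
      rintro p ⟨⟨a, b⟩, ⟨ha, hab⟩, rfl⟩ ⟨⟨c, d⟩, ⟨hc, hcd⟩, h⟩
      replace ha : a ∈ setV := ha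
      replace hc : c ∈ setV := hc
      obtain ⟨ha1, ha2⟩ : (0:ℝ) < a ∧ a < 1 := setV_subset ha
      obtain ⟨hc1, hc2⟩ : (0:ℝ) < c ∧ c < 1 := setV_subset hc
      obtain ⟨hb1, hb2⟩ : (0:ℝ) < b ∧ b < 1 := hab
      obtain ⟨hd1, hd2⟩ : (0:ℝ) < d ∧ d < 1 := hcd
      fin_cases i <;> fin_cases j <;>
        first
        | exact hij rfl
        | (obtain ⟨h1, h2⟩ := Prod.mk.injEq .. ▸ h
           first
           | linarith
           | exact no_double ha hc (by linarith)
           | exact no_double hc ha (by linarith))
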